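/- Let n ≥ 3, p ≥ 1, β ≥ n/8, and suppose real numbers |Φ|² ≥ 0, H² ≥ 0 and R₁₁ satisfy, for all ε > 0, R₁₁ ≥ (n−1) + (n−1 − (n−2)/(2ε))H² − (1 + (n−2)ε/2)·((n−1)/n)·|Φ|². Then R₁₁ + 2β|Φ|² ≥ n−1. -/
import Mathlib

theorem stmt17 (n p : ℕ) (hn : 3 ≤ n) (hp : 1 ≤ p) (β : ℝ) (hβ : (n : ℝ) / 8 ≤ β)
    (Φ2 H2 R11 : ℝ) (hΦ2 : 0 ≤ Φ2) (hH2 : 0 ≤ H2)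
    (hR : ∀ ε : ℝ, 0 < ε →
      R11 ≥ ((n : ℝ) - 1) + ((n : ℝ) - 1 - ((n : ℝ) - 2) / (2 * ε)) * H2
        - (1 + ((n : ℝ) - 2) * ε / 2) * (((n : ℝ) - 1) / n) * Φ2) :
    R11 + 2 * β * Φ2 ≥ (n : ℝ) - 1 := by
  have hn3 : (3 : ℝ) ≤ n := by exact_mod_cast hn
  have hεpos : 0 < ((n : ℝ) - 2) / (2 * ((n : ℝ) - 1)) := div_pos (by linarith) (by linarith)
  have h := hR _ hεpos
  have hH : ((n : ℝ) - 1 - ((n : ℝ) - 2) / (2 * (((n : ℝ) - 2) / (2 * ((n : ℝ) - 1))))) = 0 := by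
    have h1 : (n:ℝ)-2 ≠ 0 := by linarith
    have h2 : (n:ℝ)-1 ≠ 0 := by linarith
    have h3 : (n:ℝ) ≠ 0 := by linarith
    field_simp
    ring
  rw [hH] at h
  have hcoef : (1 + ((n : ℝ) - 2) * (((n : ℝ) - 2) / (2 * ((n : ℝ) - 1))) / 2) * (((n : ℝ) - 1) / n) = n / 4 := by
    have h1 : (n:ℝ)-2 ≠ 0 := by linarith
    have h2 : (n:ℝ)-1 ≠ 0 := by linarith
    have h3 : (n:ℝ) ≠ 0 := by linarith
    field_simp
    ring
  rw [hcoef] at h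
  nlinarith [mul_nonneg hΦ2 (by linarith : (0:ℝ) ≤ β - n/8)]
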